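/- Let M₁, …, M_L be D×D nonsingular integer matrices and R an lcrm of them. Assume there exist pairwise commutative and coprime integer matrices N₁, …, N_L such that R = N₁N₂⋯N_L U for some unimodular matrix U and N_i is a left divisor of M_i for each i. For i with N_i not unimodular, set W_i = N₁⋯N_{i−1}N_{i+1}⋯N_L and let Ŵ_i be an integer matrix satisfying W_iŴ_i + N_iQ_i = I for some integer matrix Q_i; for i with N_i unimodular set Ŵ_i = 0. Then every integer vector m ∈ 𝒩(R) is recovered from its remainders r_i = ⟨m⟩_{M_i} by the formula m = ⟨ Σ_{i=1}^{L} W_iŴ_i r_i ⟩_R. -/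

import Mathlib

open Matrix

/-- An integer matrix is unimodular if its determinant is `1` or `-1`. -/
def Unimod {D : ℕ} (U : Matrix (Fin D) (Fin D) ℤ) : Prop := U.det = 1 ∨ U.det = -1

/-- `C` is a common right multiple (crm) of the family `M`. -/
def IsCRM {D n : ℕ} (M : Fin n → Matrix (Fin D) (Fin D) ℤ)
    (C : Matrix (Fin D) (Fin D) ℤ) : Prop :=
  C.det ≠ 0 ∧ ∀ i, ∃ Q : Matrix (Fin D) (Fin D) ℤ, C = M i * Q

/-- `C` is a least common right multiple (lcrm) of the family `M`. -/
def IsLCRM {D n : ℕ} (M : Fin n → Matrix (Fin D) (Fin D) ℤ)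
    (C : Matrix (Fin D) (Fin D) ℤ) : Prop :=
  IsCRM M C ∧ ∀ C', IsCRM M C' → ∃ P : Matrix (Fin D) (Fin D) ℤ, C' = C * P

/-- `C` is a common left multiple (clm) of the family `M`. -/
def IsCLM {D n : ℕ} (M : Fin n → Matrix (Fin D) (Fin D) ℤ)
    (C : Matrix (Fin D) (Fin D) ℤ) : Prop :=
  C.det ≠ 0 ∧ ∀ i, ∃ Q : Matrix (Fin D) (Fin D) ℤ, C = Q * M i

/-- `C` is a least common left multiple (lclm) of the family `M`. -/
def IsLCLM {D n : ℕ} (M : Fin n → Matrix (Fin D) (Fin D) ℤ)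
    (C : Matrix (Fin D) (Fin D) ℤ) : Prop :=
  IsCLM M C ∧ ∀ C', IsCLM M C' → ∃ P : Matrix (Fin D) (Fin D) ℤ, C' = P * C

/-- `B` is a common left divisor (cld) of the family `M`. -/
def IsCLD {D n : ℕ} (M : Fin n → Matrix (Fin D) (Fin D) ℤ)
    (B : Matrix (Fin D) (Fin D) ℤ) : Prop :=
  B.det ≠ 0 ∧ ∀ i, ∃ K : Matrix (Fin D) (Fin D) ℤ, M i = B * K

/-- `B` is a greatest common left divisor (gcld) of the family `M`:
`B` is a cld, and every cld of the family is a left divisor of `B`. -/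
def IsGCLD {D n : ℕ} (M : Fin n → Matrix (Fin D) (Fin D) ℤ)
    (B : Matrix (Fin D) (Fin D) ℤ) : Prop :=
  IsCLD M B ∧ ∀ B', IsCLD M B' → ∃ K : Matrix (Fin D) (Fin D) ℤ, B = B' * K

/-- `A` and `B` are left coprime: every (nonsingular) common left divisor is unimodular. -/
def LeftCoprime {D : ℕ} (A B : Matrix (Fin D) (Fin D) ℤ) : Prop :=
  ∀ C : Matrix (Fin D) (Fin D) ℤ, C.det ≠ 0 →
    (∃ K, A = C * K) → (∃ K, B = C * K) → Unimod C

/-- `A` and `B` are right coprime: every (nonsingular) common right divisor is unimodular. -/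
def RightCoprime {D : ℕ} (A B : Matrix (Fin D) (Fin D) ℤ) : Prop :=
  ∀ C : Matrix (Fin D) (Fin D) ℤ, C.det ≠ 0 →
    (∃ K, A = K * C) → (∃ K, B = K * C) → Unimod C

/-- `A` and `B` are coprime (for commuting matrices left and right coprimeness coincide). -/
def MatCoprime {D : ℕ} (A B : Matrix (Fin D) (Fin D) ℤ) : Prop :=
  LeftCoprime A B ∧ RightCoprime A B

/-- The lattice generated by an integer matrix `M`: all integer combinations `M n`. -/
def LAT {D : ℕ} (M : Matrix (Fin D) (Fin D) ℤ) : Set (Fin D → ℤ) :=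
  {v | ∃ n : Fin D → ℤ, v = M.mulVec n}

/-- `𝒩(M)`: the integer vectors of the form `M x` with `x ∈ [0,1)^D`. -/
def NSet {D : ℕ} (M : Matrix (Fin D) (Fin D) ℤ) : Set (Fin D → ℤ) :=
  {k | ∃ x : Fin D → ℚ, (∀ j, 0 ≤ x j ∧ x j < 1) ∧
      (M.map (Int.cast : ℤ → ℚ)).mulVec x = fun j => (k j : ℚ)}

/-- `r` is the remainder of `m` modulo `M`: `r ∈ 𝒩(M)` and `m − r ∈ LAT(M)`. -/
def IsRem {D : ℕ} (M : Matrix (Fin D) (Fin D) ℤ) (m r : Fin D → ℤ) : Prop :=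
  r ∈ NSet M ∧ (m - r) ∈ LAT M

/-- The Euclidean norm on `ℝ^D`. -/
noncomputable def euclNorm {D : ℕ} (v : Fin D → ℝ) : ℝ := Real.sqrt (∑ j, (v j) ^ 2)

/-- The lattice generated by a real matrix `M`: all integer combinations `M n`. -/
def LATR {D : ℕ} (M : Matrix (Fin D) (Fin D) ℝ) : Set (Fin D → ℝ) :=
  {v | ∃ n : Fin D → ℤ, v = M.mulVec (fun j => (n j : ℝ))}

section Stmt6Aux

open Matrix

variable {D : ℕ}

private lemma stmt6_lat_iff (M : Matrix (Fin D) (Fin D) ℤ) (v : Fin D → ℤ) :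
    v ∈ LAT M ↔ v ∈ LinearMap.range (Matrix.mulVecLin M) := by
  constructor
  · rintro ⟨n, rfl⟩; exact ⟨n, rfl⟩
  · rintro ⟨n, rfl⟩; exact ⟨n, rfl⟩

private lemma stmt6_unimod_inv {U : Matrix (Fin D) (Fin D) ℤ} (hU : Unimod U) :
    ∃ V : Matrix (Fin D) (Fin D) ℤ, U * V = 1 ∧ V * U = 1 := by
  have hdd : U.det * U.det = 1 := by rcases hU with h | h <;> rw [h] <;> ring
  refine ⟨U.det • U.adjugate, ?_, ?_⟩
  · rw [Matrix.mul_smul, Matrix.mul_adjugate, smul_smul, hdd, one_smul]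
  · rw [Matrix.smul_mul, Matrix.adjugate_mul, smul_smul, hdd, one_smul]

private lemma stmt6_lat_unimod {M : Matrix (Fin D) (Fin D) ℤ} (hM : Unimod M)
    (v : Fin D → ℤ) : v ∈ LAT M := by
  obtain ⟨V, hUV, _⟩ := stmt6_unimod_inv hM
  exact ⟨V.mulVec v, by rw [Matrix.mulVec_mulVec, hUV, Matrix.one_mulVec]⟩

private lemma stmt6_key (A B X Y : Matrix (Fin D) (Fin D) ℤ) (hB : B.det ≠ 0)
    (hc : A * B = B * A) (hbez : A * X + B * Y = 1) {a : Fin D → ℤ}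
    (hv : A.mulVec a ∈ LAT B) : a ∈ LAT B := by
  set S : Submodule ℤ (Fin D → ℤ) := LinearMap.range (Matrix.mulVecLin B) with hS
  have hmap : S ≤ S.comap (Matrix.mulVecLin A) := by
    rintro _ ⟨x, rfl⟩
    refine ⟨A.mulVec x, ?_⟩
    simp only [Matrix.mulVecLin_apply, Matrix.mulVec_mulVec, hc]
  set φ : ((Fin D → ℤ) ⧸ S) →ₗ[ℤ] ((Fin D → ℤ) ⧸ S) :=
    Submodule.mapQ S S (Matrix.mulVecLin A) hmap with hφ
  have hφ_mk : ∀ u : Fin D → ℤ,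
      φ (Submodule.Quotient.mk u) = Submodule.Quotient.mk (A.mulVec u) := by
    intro u; rw [hφ, Submodule.mapQ_apply, Matrix.mulVecLin_apply]
  have hsurj : Function.Surjective φ := by
    intro q
    obtain ⟨u, rfl⟩ := Submodule.Quotient.mk_surjective S q
    refine ⟨Submodule.Quotient.mk (X.mulVec u), ?_⟩
    rw [hφ_mk, Submodule.Quotient.eq]
    refine ⟨-(Y.mulVec u), ?_⟩
    have h1 : A.mulVec (X.mulVec u) - u = (A * X - 1).mulVec u := by
      rw [Matrix.sub_mulVec, Matrix.mulVec_mulVec, Matrix.one_mulVec]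
    have h2 : A * X - 1 = -(B * Y) := by rw [← hbez]; abel
    rw [Matrix.mulVecLin_apply, h1, h2, Matrix.mulVec_neg, Matrix.mulVec_mulVec,
      Matrix.neg_mulVec]
  have htor : Module.IsTorsion ℤ ((Fin D → ℤ) ⧸ S) := by
    intro q
    obtain ⟨u, rfl⟩ := Submodule.Quotient.mk_surjective S q
    refine ⟨⟨B.det, mem_nonZeroDivisors_of_ne_zero hB⟩, ?_⟩
    rw [Submonoid.smul_def, ← Submodule.Quotient.mk_smul, Submodule.Quotient.mk_eq_zero]
    refine ⟨B.adjugate.mulVec u, ?_⟩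
    rw [Matrix.mulVecLin_apply, Matrix.mulVec_mulVec, Matrix.mul_adjugate,
      Matrix.smul_mulVec, Matrix.one_mulVec]
  have hfin : Finite ((Fin D → ℤ) ⧸ S) := Module.finite_of_fg_torsion _ htor
  have hinj : Function.Injective φ := (Finite.injective_iff_surjective).mpr hsurj
  have h0 : φ (Submodule.Quotient.mk a) = 0 := by
    rw [hφ_mk, Submodule.Quotient.mk_eq_zero]
    exact (stmt6_lat_iff B _).mp hv
  have hz := hinj (by rw [h0, map_zero] : φ (Submodule.Quotient.mk a) = φ 0)
  rw [stmt6_lat_iff]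
  exact (Submodule.Quotient.mk_eq_zero S).mp hz

private lemma stmt6_comm_prod (a : Matrix (Fin D) (Fin D) ℤ)
    (l : List (Matrix (Fin D) (Fin D) ℤ)) (h : ∀ b ∈ l, a * b = b * a) :
    a * l.prod = l.prod * a :=
  Commute.list_prod_right _ _ (fun b hb => h b hb)

private lemma stmt6_prod_extract (l : List (Matrix (Fin D) (Fin D) ℤ))
    (hc : ∀ a ∈ l, ∀ b ∈ l, a * b = b * a)
    {a : Matrix (Fin D) (Fin D) ℤ} (ha : a ∈ l) : ∃ B, l.prod = a * B := by
  induction l with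
  | nil => simp at ha
  | cons h t ih =>
    rcases List.mem_cons.mp ha with rfl | hat
    · exact ⟨t.prod, by rw [List.prod_cons]⟩
    · obtain ⟨B, hB⟩ := ih
        (fun x hx y hy => hc x (List.mem_cons_of_mem _ hx) y (List.mem_cons_of_mem _ hy)) hat
      exact ⟨h * B, by
        rw [List.prod_cons, hB, ← mul_assoc,
          hc h List.mem_cons_self a ha, mul_assoc]⟩

private lemma stmt6_prod_eraseIdx (l : List (Matrix (Fin D) (Fin D) ℤ)) (i : ℕ) :
    (l.eraseIdx i).prod = (l.take i).prod * (l.drop (i + 1)).prod := by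
  rw [List.eraseIdx_eq_take_drop_succ, List.prod_append]

end Stmt6Aux

/-- reconstruction formula of the MD-CRT (Corollary 1):
`m = ⟨ Σᵢ Wᵢ Ŵᵢ rᵢ ⟩_R`. -/
theorem stmt6 {D L : ℕ} (hL : 1 ≤ L)
    (M N : Fin L → Matrix (Fin D) (Fin D) ℤ)
    (hM : ∀ i, (M i).det ≠ 0) (hN : ∀ i, (N i).det ≠ 0)
    (R : Matrix (Fin D) (Fin D) ℤ) (hR : IsLCRM M R)
    (hNcomm : ∀ i j, N i * N j = N j * N i)
    (hNcop : ∀ i j, i ≠ j → MatCoprime (N i) (N j))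
    (U : Matrix (Fin D) (Fin D) ℤ) (hU : Unimod U)
    (hRU : R = (List.ofFn N).prod * U)
    (hdiv : ∀ i, ∃ K : Matrix (Fin D) (Fin D) ℤ, M i = N i * K)
    (W Wh : Fin L → Matrix (Fin D) (Fin D) ℤ)
    (hW : ∀ i, W i = ((List.ofFn N).eraseIdx i.val).prod)
    (hWh : ∀ i, (¬ Unimod (N i) →
        ∃ Q : Matrix (Fin D) (Fin D) ℤ, W i * Wh i + N i * Q = 1) ∧
      (Unimod (N i) → Wh i = 0))
    (m : Fin D → ℤ) (hm : m ∈ NSet R)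
    (r : Fin L → Fin D → ℤ) (hr : ∀ i, IsRem (M i) m (r i)) :
    IsRem R (∑ i, (W i * Wh i).mulVec (r i)) m := by
    classical
  refine ⟨hm, ?_⟩
  set l : List (Matrix (Fin D) (Fin D) ℤ) := List.ofFn N with hl
  have hlen : l.length = L := by rw [hl]; exact List.length_ofFn
  have hmem : ∀ a ∈ l, ∃ i, N i = a := by
    intro a ha
    rw [hl] at ha
    obtain ⟨i, hi⟩ := List.mem_ofFn.mp ha
    exact ⟨i, hi⟩
  have hcl : ∀ a ∈ l, ∀ b ∈ l, a * b = b * a := by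
    intro a ha b hb
    obtain ⟨i, rfl⟩ := hmem a ha
    obtain ⟨j, rfl⟩ := hmem b hb
    exact hNcomm i j
  set s : Fin D → ℤ := ∑ i, (W i * Wh i).mulVec (r i) with hs
  -- Step A : s - m lies in each LAT (N i)
  have stepA : ∀ i : Fin L, (s - m) ∈ LAT (N i) := by
    intro i
    by_cases hu : Unimod (N i)
    · exact stmt6_lat_unimod hu _
    obtain ⟨Q, hQ⟩ := (hWh i).1 hu
    rw [stmt6_lat_iff]
    have hsum : s - m = ((W i * Wh i).mulVec (r i) - m)
        + ∑ j ∈ Finset.univ.erase i, (W j * Wh j).mulVec (r j) := by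
      rw [hs, ← Finset.add_sum_erase _ _ (Finset.mem_univ i)]
      abel
    rw [hsum]
    refine Submodule.add_mem _ ?_ (Submodule.sum_mem _ ?_)
    · obtain ⟨K, hK⟩ := hdiv i
      obtain ⟨n, hn⟩ := (hr i).2
      refine ⟨-(Q.mulVec (r i)) - K.mulVec n, ?_⟩
      simp only [Matrix.mulVecLin_apply]
      have hW1 : W i * Wh i = 1 - N i * Q := by rw [← hQ]; abel
      have hmr : (N i).mulVec (K.mulVec n) = m - r i := by
        rw [Matrix.mulVec_mulVec, ← hK, ← hn]
      rw [Matrix.mulVec_sub, Matrix.mulVec_neg, Matrix.mulVec_mulVec, hW1,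
        Matrix.sub_mulVec, Matrix.one_mulVec, hmr]
      abel
    · intro j hj
      have hji : j ≠ i := Finset.ne_of_mem_erase hj
      have hvij : (i : ℕ) ≠ (j : ℕ) := fun h => hji (Fin.ext h.symm)
      have hNil : N i ∈ l.eraseIdx (j : ℕ) := by
        rcases lt_or_gt_of_ne hvij with hlt | hgt
        · refine List.mem_of_getElem? (i := (i : ℕ)) ?_
          rw [List.getElem?_eraseIdx_of_lt hlt, hl]
          have hb : (i : ℕ) < (List.ofFn N).length := by
            rw [List.length_ofFn]; exact i.isLt
          rw [List.getElem?_eq_getElem hb, List.getElem_ofFn]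
        · refine List.mem_of_getElem? (i := (i : ℕ) - 1) ?_
          rw [List.getElem?_eraseIdx_of_ge (by omega), hl]
          rw [show (i : ℕ) - 1 + 1 = (i : ℕ) from by omega]
          have hb : (i : ℕ) < (List.ofFn N).length := by
            rw [List.length_ofFn]; exact i.isLt
          rw [List.getElem?_eq_getElem hb, List.getElem_ofFn]
      have hclj : ∀ a ∈ l.eraseIdx (j : ℕ), ∀ b ∈ l.eraseIdx (j : ℕ), a * b = b * a :=
        fun a ha b hb => hcl a (List.mem_of_mem_eraseIdx ha) b (List.mem_of_mem_eraseIdx hb)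
      obtain ⟨B, hB⟩ := stmt6_prod_extract (l.eraseIdx (j : ℕ)) hclj hNil
      refine ⟨(B * Wh j).mulVec (r j), ?_⟩
      simp only [Matrix.mulVecLin_apply]
      rw [Matrix.mulVec_mulVec, hW j, hB, mul_assoc]
  -- Step B : induction over partial products
  have stepB : ∀ k : ℕ, k ≤ L → (s - m) ∈ LAT ((l.take k).prod) := by
    intro k
    induction k with
    | zero =>
      intro _
      exact ⟨s - m, by rw [List.take_zero, List.prod_nil, Matrix.one_mulVec]⟩
    | succ k ih =>
      intro hk1
      have hkL : k < L := hk1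
      have hkl : k < l.length := by rw [hlen]; exact hkL
      have hgetk : l[k]'hkl = N ⟨k, hkL⟩ := List.getElem_ofFn _
      have hPsucc : (l.take (k + 1)).prod = (l.take k).prod * N ⟨k, hkL⟩ := by
        rw [List.prod_take_succ l k hkl, hgetk]
      have hcPk : (l.take k).prod * N ⟨k, hkL⟩ = N ⟨k, hkL⟩ * (l.take k).prod := by
        refine (stmt6_comm_prod (N ⟨k, hkL⟩) (l.take k) ?_).symm
        intro b hb
        obtain ⟨jj, rfl⟩ := hmem b (List.take_subset _ _ hb)
        exact hNcomm ⟨k, hkL⟩ jj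
      obtain ⟨a, ha⟩ := ih (le_of_lt hkL)
      have haN : a ∈ LAT (N ⟨k, hkL⟩) := by
        by_cases hu : Unimod (N ⟨k, hkL⟩)
        · exact stmt6_lat_unimod hu a
        · obtain ⟨Q, hQ⟩ := (hWh ⟨k, hkL⟩).1 hu
          have hWfact : W ⟨k, hkL⟩ = (l.take k).prod * (l.drop (k + 1)).prod := by
            rw [hW ⟨k, hkL⟩]
            exact stmt6_prod_eraseIdx l k
          have hbez : (l.take k).prod * ((l.drop (k + 1)).prod * Wh ⟨k, hkL⟩)
              + N ⟨k, hkL⟩ * Q = 1 := by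
            rw [← mul_assoc, ← hWfact, hQ]
          refine stmt6_key ((l.take k).prod) (N ⟨k, hkL⟩) _ Q (hN _) hcPk hbez ?_
          rw [← ha]
          exact stepA ⟨k, hkL⟩
      obtain ⟨w, hw⟩ := haN
      refine ⟨w, ?_⟩
      rw [hPsucc, ← Matrix.mulVec_mulVec, ← hw, ← ha]
  -- conclude
  have hfull : (s - m) ∈ LAT ((List.ofFn N).prod) := by
    have h := stepB L le_rfl
    rwa [List.take_of_length_le hlen.le, hl] at h
  obtain ⟨n, hn⟩ := hfull
  obtain ⟨V, hUV, hVU⟩ := stmt6_unimod_inv hU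
  refine ⟨V.mulVec n, ?_⟩
  rw [hn, hRU, Matrix.mulVec_mulVec, mul_assoc, hUV, mul_one]
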